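/- Let Q ≻ 0 and for each fixing r of the first ℓ variables let y(r) = −(1/2)Q_ℓ⁻¹ c(r) be the unconstrained minimizer of the reduced quadratic f_r. Then for r = (r', r_ℓ) there exists a vector z^{ℓ−1} ∈ ℝ^{n−ℓ+1}, depending only on ℓ (not on r'), such that y(r) = [y(r') + α z^{ℓ−1}]_{1,…,n−ℓ} with α = r_ℓ − y(r')_ℓ. Equivalently: the unconstrained continuous minimizers corresponding to all possible values of the next fixed variable lie on a common line whose direction depends only on the depth ℓ. -/

import Mathlib

open Matrix Finset

lemma posDef_submatrix_inj {m n : Type*} [Fintype m] [Fintype n] [DecidableEq n]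
    {M : Matrix n n ℝ} (hM : M.PosDef) (e : m → n) (he : Function.Injective e) :
    (M.submatrix e e).PosDef := by
  refine posDef_iff_dotProduct_mulVec.mpr ⟨?_, ?_⟩
  · ext i j
    simp only [conjTranspose_apply, submatrix_apply, star_trivial]
    exact hM.1.apply (e i) (e j)
  · intro x hx
    set y : n → ℝ := Function.extend e x 0 with hy
    have hye : ∀ j, y (e j) = x j := fun j => he.extend_apply x 0 j
    have hy0 : ∀ i, i ∉ Finset.univ.image e → y i = 0 := by
      intro i hi
      rw [hy, Function.extend_apply']
      · rfl
      · rintro ⟨j, rfl⟩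
        exact hi (Finset.mem_image_of_mem e (Finset.mem_univ j))
    have key : star x ⬝ᵥ (M.submatrix e e) *ᵥ x = star y ⬝ᵥ M *ᵥ y := by
      have inner : ∀ i : n, (M *ᵥ y) i = ∑ j' : m, M i (e j') * x j' := by
        intro i
        rw [mulVec, dotProduct]
        rw [← Finset.sum_subset (Finset.subset_univ (Finset.univ.image e))]
        · rw [Finset.sum_image (fun a _ b _ h => he h)]
          simp [hye]
        · intro i' _ hi'
          rw [hy0 i' hi', mul_zero]
      rw [dotProduct, dotProduct]
      rw [← Finset.sum_subset (Finset.subset_univ (Finset.univ.image e))]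
      · rw [Finset.sum_image (fun a _ b _ h => he h)]
        apply Finset.sum_congr rfl
        intro j _
        simp only [Pi.star_apply, star_trivial, hye, inner]
        simp [mulVec, dotProduct, hye]
      · intro i _ hi
        simp [hy0 i hi]
    rw [key]
    apply hM.dotProduct_mulVec_pos
    intro h0
    apply hx
    funext j
    have := congrFun h0 (e j)
    rwa [hye] at this

theorem stmt_15 (l k n : ℕ) (hn : n = l + k + 1)
    (Q : Matrix (Fin n) (Fin n) ℝ) (hQ : Q.PosDef) (c : Fin n → ℝ) :
    ∃ z : Fin (k + 1) → ℝ, ∀ (r' : Fin l → ℝ) (rl : ℝ),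
      -- parent: first `l` variables fixed to `r'`, remaining dimension `k+1`
      ∀ (Qp : Matrix (Fin (k + 1)) (Fin (k + 1)) ℝ),
        Qp = Q.submatrix (fun i => (⟨l + i.val, by omega⟩ : Fin n))
                         (fun i => (⟨l + i.val, by omega⟩ : Fin n)) →
      ∀ cp : Fin (k + 1) → ℝ,
        (∀ j : Fin (k + 1), cp j = c ⟨l + j.val, by omega⟩ +
          2 * ∑ i : Fin l, Q ⟨i.val, by omega⟩ ⟨l + j.val, by omega⟩ * r' i) →
      -- child: additionally the branched variable (last coordinate) fixed to `rl`,
      -- remaining dimension `k`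
      ∀ (Qc : Matrix (Fin k) (Fin k) ℝ),
        Qc = Q.submatrix (fun i => (⟨l + i.val, by omega⟩ : Fin n))
                         (fun i => (⟨l + i.val, by omega⟩ : Fin n)) →
      ∀ cc : Fin k → ℝ,
        (∀ j : Fin k, cc j = c ⟨l + j.val, by omega⟩ +
          2 * (∑ i : Fin l, Q ⟨i.val, by omega⟩ ⟨l + j.val, by omega⟩ * r' i) +
          2 * Q ⟨l + k, by omega⟩ ⟨l + j.val, by omega⟩ * rl) →
      ∀ yp : Fin (k + 1) → ℝ, yp = (-(1/2 : ℝ)) • (Qp⁻¹ *ᵥ cp) →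
      ∀ yc : Fin k → ℝ, yc = (-(1/2 : ℝ)) • (Qc⁻¹ *ᵥ cc) →
      ∀ α : ℝ, α = rl - yp (Fin.last k) →
      -- the child's minimizer is the truncation of `yp + α z` to the first `k` components
      ∀ j : Fin k, yc j = yp (Fin.castSucc j) + α * z (Fin.castSucc j) := by
  -- notation
  set e0 : Fin k → Fin n := fun i => ⟨l + i.val, by omega⟩ with he0
  set A : Matrix (Fin k) (Fin k) ℝ := Q.submatrix e0 e0 with hA
  set b : Fin k → ℝ := fun j => Q ⟨l + k, by omega⟩ ⟨l + j.val, by omega⟩ with hb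
  refine ⟨Fin.lastCases 0 (-(A⁻¹ *ᵥ b)), ?_⟩
  intro r' rl Qp hQp cp hcp Qc hQc cc hcc yp hyp yc hyc α hα j
  have he0inj : Function.Injective e0 := by
    intro a b h
    have : l + a.val = l + b.val := congrArg Fin.val h
    exact Fin.ext (by omega)
  have he1inj : Function.Injective
      (fun i : Fin (k+1) => (⟨l + i.val, by omega⟩ : Fin n)) := by
    intro a b h
    have : l + a.val = l + b.val := congrArg Fin.val h
    exact Fin.ext (by omega)
  have hQcA : Qc = A := by rw [hQc, hA]
  have hQpPD : Qp.PosDef := hQp ▸ posDef_submatrix_inj hQ _ he1inj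
  have hAPD : A.PosDef := posDef_submatrix_inj hQ _ he0inj
  have hAdet : IsUnit A.det := isUnit_iff_ne_zero.mpr (ne_of_gt hAPD.det_pos)
  have hQpdet : IsUnit Qp.det := isUnit_iff_ne_zero.mpr (ne_of_gt hQpPD.det_pos)
  -- Qp *ᵥ yp = (-(1/2)) • cp
  have hQpyp : Qp *ᵥ yp = (-(1/2 : ℝ)) • cp := by
    rw [hyp, mulVec_smul, mulVec_mulVec, Qp.mul_nonsing_inv hQpdet, one_mulVec]
  set u : Fin k → ℝ := fun i => yp (Fin.castSucc i) with hu
  set t : ℝ := yp (Fin.last k) with ht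
  -- the row identity: A *ᵥ u + t • b = (-(1/2)) • (cp ∘ castSucc)
  have hrow : ∀ j : Fin k, (A *ᵥ u) j + t * b j = (-(1/2 : ℝ)) * cp (Fin.castSucc j) := by
    intro j
    have := congrFun hQpyp (Fin.castSucc j)
    rw [mulVec, dotProduct, Fin.sum_univ_castSucc] at this
    have hlast : Qp (Fin.castSucc j) (Fin.last k) = b j := by
      rw [hQp]
      simp only [submatrix_apply, Fin.val_last, Fin.coe_castSucc]
      have := hQ.1.apply (⟨l + k, by omega⟩ : Fin n) (⟨l + j.val, by omega⟩ : Fin n)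
      rw [hb]
      simpa using this
    have hAeq : ∀ i : Fin k, Qp (Fin.castSucc j) (Fin.castSucc i) = A j i := by
      intro i
      rw [hQp, hA]
      simp [e0]
    rw [hlast] at this
    have hsum : ∑ i : Fin k, Qp (Fin.castSucc j) (Fin.castSucc i) * yp (Fin.castSucc i)
        = (A *ᵥ u) j := by
      rw [mulVec, dotProduct]
      exact Finset.sum_congr rfl fun i _ => by rw [hAeq i, hu]
    rw [hsum] at this
    simp only [Pi.smul_apply, smul_eq_mul] at this
    linear_combination this
  -- cc relation: cc j = cp (castSucc j) + 2 * b j * rl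
  have hccrel : ∀ j : Fin k, cc j = cp (Fin.castSucc j) + 2 * b j * rl := by
    intro j
    rw [hcc j, hcp (Fin.castSucc j), hb]
    simp only [Fin.coe_castSucc]
  -- key vector identity
  have hkey : (-(1/2 : ℝ)) • cc = A *ᵥ u - α • b := by
    funext j
    simp only [Pi.smul_apply, smul_eq_mul, Pi.sub_apply]
    rw [hccrel j, hα]
    linear_combination -(hrow j)
  -- conclude
  have hycval : yc = u - α • (A⁻¹ *ᵥ b) := by
    rw [hyc, hQcA, ← mulVec_smul, hkey]
    rw [mulVec_sub, ← mulVec_smul]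
    rw [mulVec_mulVec, A.nonsing_inv_mul hAdet, one_mulVec]
  rw [hycval]
  simp only [Pi.sub_apply, Pi.smul_apply, smul_eq_mul, hu]
  rw [Fin.lastCases_castSucc]
  simp only [Pi.neg_apply]
  ring
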